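/- Any inverse limit of semisimple rings along surjective connecting homomorphisms (indexed by ℕ) is isomorphic to a direct product of semisimple rings; in particular it is unit-regular. -/

import Mathlib

universe v

section
open Submodule LinearMap

variable {R : Type*} [Ring R] {M : Type*} [AddCommGroup M] [Module R M]

/-- Two simple isomorphic submodules of a semisimple module have isomorphic complements. -/
theorem commonComplement [IsSemisimpleModule R M] {S T B C : Submodule R M}
    (hS : IsSimpleModule R S) (hT : IsSimpleModule R T) (iso : S ≃ₗ[R] T)
    (hB : IsCompl S B) (hC : IsCompl T C) : Nonempty (B ≃ₗ[R] C) := by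
  by_cases hST : S = T
  · subst hST
    exact ⟨((S.quotientEquivOfIsCompl B hB).symm.trans (S.quotientEquivOfIsCompl C hC))⟩
  have hdisj : Disjoint S T :=
    (isSimpleModule_iff_isAtom.mp hS).disjoint_of_ne (isSimpleModule_iff_isAtom.mp hT) hST
  obtain ⟨E, hE⟩ := exists_isCompl (S ⊔ T)
  set D : Submodule R M := LinearMap.range (S.subtype + T.subtype ∘ₗ iso.toLinearMap) with hD
  have hDle : D ≤ S ⊔ T := by
    rintro x ⟨s, rfl⟩
    exact add_mem (le_sup_left (b := T) s.2) (le_sup_right (a := S) (iso s).2)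
  have memD : ∀ s : S, (s : M) + (iso s : M) ∈ D := fun s => ⟨s, rfl⟩
  -- the common complement is D ⊔ E
  have hScompl : IsCompl S (D ⊔ E) := by
    constructor
    · rw [disjoint_iff]
      ext x
      simp only [Submodule.mem_inf, Submodule.mem_bot]
      constructor
      · rintro ⟨hxS, hxDE⟩
        rw [Submodule.mem_sup] at hxDE
        obtain ⟨d, hd, e, he, rfl⟩ := hxDE
        have hdST : d ∈ S ⊔ T := hDle hd
        have heST : e ∈ S ⊔ T := by
          have : e = (d + e) - d := by abel
          rw [this]
          exact sub_mem (le_sup_left (b := T) hxS) hdST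
        have he0 : e = 0 := by
          have := hE.disjoint.le_bot ⟨heST, he⟩
          simpa using this
        subst he0
        rw [add_zero] at hxS ⊢
        obtain ⟨s, rfl⟩ := hd
        have : (iso s : M) ∈ S ⊓ T := by
          constructor
          · have : (iso s : M) = ((s : M) + (iso s : M)) - (s : M) := by abel
            rw [this]; exact sub_mem hxS s.2
          · exact (iso s).2
        have : (iso s : M) = 0 := by simpa using hdisj.le_bot this
        have : iso s = 0 := Subtype.ext this
        have hs0 : s = 0 := by
          apply iso.injective; simp [this]
        simp [hs0]
      · rintro rfl; simp
    · rw [codisjoint_iff, eq_top_iff, ← hE.sup_eq_top]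
      have hDle' : D ≤ S ⊔ (D ⊔ E) := le_trans le_sup_left le_sup_right
      have hEle' : E ≤ S ⊔ (D ⊔ E) := le_trans le_sup_right le_sup_right
      have hSle' : S ≤ S ⊔ (D ⊔ E) := le_sup_left
      refine sup_le (sup_le hSle' ?_) hEle'
      intro t ht
      have h1 : ((iso.symm ⟨t, ht⟩ : S) : M) + (t : M) ∈ D := by
        have := memD (iso.symm ⟨t, ht⟩)
        simpa using this
      have h2 : t = (((iso.symm ⟨t, ht⟩ : S) : M) + t) - ((iso.symm ⟨t, ht⟩ : S) : M) := by abel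
      rw [h2]
      exact sub_mem (hDle' h1) (hSle' (iso.symm ⟨t, ht⟩).2)
  have hTcompl : IsCompl T (D ⊔ E) := by
    constructor
    · rw [disjoint_iff]
      ext x
      simp only [Submodule.mem_inf, Submodule.mem_bot]
      constructor
      · rintro ⟨hxT, hxDE⟩
        rw [Submodule.mem_sup] at hxDE
        obtain ⟨d, hd, e, he, rfl⟩ := hxDE
        have hdST : d ∈ S ⊔ T := hDle hd
        have heST : e ∈ S ⊔ T := by
          have : e = (d + e) - d := by abel
          rw [this]
          exact sub_mem (le_sup_right (a := S) hxT) hdST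
        have he0 : e = 0 := by
          have := hE.disjoint.le_bot ⟨heST, he⟩
          simpa using this
        subst he0
        rw [add_zero] at hxT ⊢
        obtain ⟨s, rfl⟩ := hd
        have : (s : M) ∈ S ⊓ T := by
          refine ⟨s.2, ?_⟩
          have : (s : M) = ((s : M) + (iso s : M)) - (iso s : M) := by abel
          rw [this]; exact sub_mem hxT (iso s).2
        have : (s : M) = 0 := by simpa using hdisj.le_bot this
        have hs0 : s = 0 := Subtype.ext this
        simp [hs0]
      · rintro rfl; simp
    · rw [codisjoint_iff, eq_top_iff, ← hE.sup_eq_top]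
      have hDle' : D ≤ T ⊔ (D ⊔ E) := le_trans le_sup_left le_sup_right
      have hEle' : E ≤ T ⊔ (D ⊔ E) := le_trans le_sup_right le_sup_right
      have hTle' : T ≤ T ⊔ (D ⊔ E) := le_sup_left
      refine sup_le (sup_le ?_ hTle') hEle'
      intro s hs
      have h1 : (s : M) + ((iso ⟨s, hs⟩ : T) : M) ∈ D := memD ⟨s, hs⟩
      have h2 : s = ((s : M) + ((iso ⟨s, hs⟩ : T) : M)) - ((iso ⟨s, hs⟩ : T) : M) := by abel
      rw [h2]
      exact sub_mem (hDle' h1) (hTle' (iso ⟨s, hs⟩).2)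
  exact ⟨((S.quotientEquivOfIsCompl B hB).symm.trans (S.quotientEquivOfIsCompl _ hScompl)).trans
    (((T.quotientEquivOfIsCompl _ hTcompl).symm).trans (T.quotientEquivOfIsCompl C hC))⟩
end

section
open Submodule LinearMap

variable {R : Type*} [Ring R]

theorem prodSemisimple {M N : Type*} [AddCommGroup M] [Module R M] [AddCommGroup N] [Module R N]
    [IsSemisimpleModule R M] [IsSemisimpleModule R N] : IsSemisimpleModule R (M × N) := by
  have h1 : IsSemisimpleModule R (LinearMap.range (inl R M N)) :=
    IsSemisimpleModule.congr (LinearEquiv.ofInjective _ LinearMap.inl_injective).symm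
  have h2 : IsSemisimpleModule R (LinearMap.range (inr R M N)) :=
    IsSemisimpleModule.congr (LinearEquiv.ofInjective _ LinearMap.inr_injective).symm
  have := IsSemisimpleModule.sup h1 h2
  rw [LinearMap.sup_range_inl_inr] at this
  exact IsSemisimpleModule.congr Submodule.topEquiv.symm

end

section
open Submodule LinearMap

variable {R : Type*} [Ring R]

theorem simpleCancel {S X Y : Type*} [AddCommGroup S] [Module R S] [AddCommGroup X] [Module R X]
    [AddCommGroup Y] [Module R Y] [IsSimpleModule R S] [IsSemisimpleModule R X]
    [IsSemisimpleModule R Y] (e : (S × X) ≃ₗ[R] (S × Y)) : Nonempty (X ≃ₗ[R] Y) := by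
  haveI : IsSemisimpleModule R (S × Y) := prodSemisimple
  set M := S × Y
  set P : Submodule R M := LinearMap.range (inl R S Y) with hP
  set Q : Submodule R M := LinearMap.range (inr R S Y) with hQ
  have hPQ : IsCompl P Q := LinearMap.isCompl_range_inl_inr
  set P₂ : Submodule R M := (LinearMap.range (inl R S X)).map (e : (S × X) →ₗ[R] M) with hP2
  set Q₂ : Submodule R M := (LinearMap.range (inr R S X)).map (e : (S × X) →ₗ[R] M) with hQ2
  have hPQ₂ : IsCompl P₂ Q₂ := (Submodule.orderIsoMapComap e).isCompl LinearMap.isCompl_range_inl_inr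
  -- P ≃ S, P₂ ≃ S
  have eP : P ≃ₗ[R] S := (LinearEquiv.ofInjective _ LinearMap.inl_injective).symm
  have eP₂ : (LinearMap.range (inl R S X) : Submodule R (S × X)) ≃ₗ[R] P₂ :=
    e.submoduleMap (LinearMap.range (inl R S X))
  have eP₂' : P₂ ≃ₗ[R] S :=
    eP₂.symm.trans (LinearEquiv.ofInjective _ LinearMap.inl_injective).symm
  have hPsimple : IsSimpleModule R P := IsSimpleModule.congr eP
  have hP₂simple : IsSimpleModule R P₂ := IsSimpleModule.congr eP₂'
  obtain ⟨g⟩ := commonComplement hP₂simple hPsimple (eP₂'.trans eP.symm) hPQ₂ hPQ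
  -- Q₂ ≃ X, Q ≃ Y
  have eQ : Q ≃ₗ[R] Y := (LinearEquiv.ofInjective _ LinearMap.inr_injective).symm
  have eQ₂ : Q₂ ≃ₗ[R] X :=
    (e.submoduleMap (LinearMap.range (inr R S X))).symm.trans
      (LinearEquiv.ofInjective _ LinearMap.inr_injective).symm
  exact ⟨eQ₂.symm.trans (g.trans eQ)⟩
end

section
open Submodule LinearMap

variable {R : Type u} [Ring R]

theorem cancelOfFiniteLength : ∀ {A : Type v} [AddCommGroup A] [Module R A],
    IsFiniteLength R A → IsSemisimpleModule R A →
    ∀ {B C : Type v} [AddCommGroup B] [Module R B] [AddCommGroup C] [Module R C],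
    IsSemisimpleModule R B → IsSemisimpleModule R C →
    Nonempty ((A × B) ≃ₗ[R] (A × C)) → Nonempty (B ≃ₗ[R] C) := by
  intro A _ _ h
  induction h with
  | of_subsingleton =>
    rename_i M _ _ _
    intro _ B C _ _ _ _ _ _ he
    obtain ⟨e⟩ := he
    have e0 : ∀ (Z : Type v) [AddCommGroup Z] [Module R Z], Nonempty ((M × Z) ≃ₗ[R] Z) := by
      intro Z _ _
      exact ⟨LinearEquiv.ofLinear (LinearMap.snd R M Z) (LinearMap.inr R M Z)
        (LinearMap.ext fun z => rfl)
        (LinearMap.ext fun x => Prod.ext (Subsingleton.elim _ _) rfl)⟩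
    obtain ⟨eB⟩ := e0 B
    obtain ⟨eC⟩ := e0 C
    exact ⟨eB.symm.trans (e.trans eC)⟩
  | of_simple_quotient hN ih =>
    rename_i M instAG instM N instS
    intro hssM B C _ _ _ _ hB hC he
    obtain ⟨e⟩ := he
    obtain ⟨N', hN'⟩ := exists_isCompl N
    haveI hsN' : IsSimpleModule R N' :=
      IsSimpleModule.congr (N.quotientEquivOfIsCompl N' hN').symm
    have eM : (↥N' × ↥N) ≃ₗ[R] M :=
      Submodule.prodEquivOfIsCompl N' N hN'.symm
    haveI : IsSemisimpleModule R (↥N × B) := prodSemisimple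
    haveI : IsSemisimpleModule R (↥N × C) := prodSemisimple
    have E : (↥N' × (↥N × B)) ≃ₗ[R] (↥N' × (↥N × C)) :=
      ((LinearEquiv.prodAssoc R ↥N' ↥N B).symm.trans
        ((eM.prodCongr (LinearEquiv.refl R B)).trans
          (e.trans ((eM.symm.prodCongr (LinearEquiv.refl R C)).trans
            (LinearEquiv.prodAssoc R ↥N' ↥N C)))))
    obtain ⟨g⟩ := simpleCancel E
    exact ih inferInstance hB hC ⟨g⟩
end

section
open Submodule LinearMap

variable {R : Type u} [Ring R]

theorem semisimple_unitRegular [IsSemisimpleRing R] (a : R) : ∃ u : Rˣ, a * u * a = a := by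
  classical
  set ρ : R →ₗ[R] R := LinearMap.toSpanSingleton R R a with hρ
  have hρa : ∀ x : R, ρ x = x * a := fun x => by
    simp [hρ, LinearMap.toSpanSingleton_apply, smul_eq_mul]
  set K : Submodule R R := LinearMap.ker ρ
  set I : Submodule R R := LinearMap.range ρ
  obtain ⟨C, hC⟩ := exists_isCompl K
  obtain ⟨D, hD⟩ := exists_isCompl I
  -- C ≃ I
  set eCI : (↥C) ≃ₗ[R] ↥I :=
    (K.quotientEquivOfIsCompl C hC).symm.trans ρ.quotKerEquivRange with heCI
  have eCI_coe : ∀ c : C, (eCI c : R) = ρ (c : R) := by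
    intro c
    rw [heCI, LinearEquiv.trans_apply, Submodule.quotientEquivOfIsCompl_symm_apply,
      LinearMap.quotKerEquivRange_apply_mk]
  -- cancellation : K ≃ D
  have hfl : IsFiniteLength R C := by
    rw [isFiniteLength_iff_isNoetherian_isArtinian]
    constructor <;> infer_instance
  have hKD : Nonempty ((D : Submodule R R) ≃ₗ[R] K) := by
    have e1 : (↥C × ↥D) ≃ₗ[R] (↥C × ↥K) :=
      ((eCI.prodCongr (LinearEquiv.refl R D)).trans
        ((I.prodEquivOfIsCompl D hD).trans
          ((K.prodEquivOfIsCompl C hC).symm.trans (LinearEquiv.prodComm R ↥K ↥C))))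
    exact cancelOfFiniteLength hfl inferInstance inferInstance inferInstance ⟨e1⟩
  obtain ⟨eDK⟩ := hKD
  -- automorphism g of R
  set g : R ≃ₗ[R] R :=
    ((K.prodEquivOfIsCompl C hC).symm.trans
      ((eDK.symm.prodCongr eCI).trans (D.prodEquivOfIsCompl I hD.symm))) with hg
  have hgC : ∀ c : C, g (c : R) = ρ (c : R) := by
    intro c
    have h1 : (K.prodEquivOfIsCompl C hC).symm (c : R) = (0, c) := by
      apply (K.prodEquivOfIsCompl C hC).injective
      rw [LinearEquiv.apply_symm_apply]
      have := DFunLike.congr_fun (Submodule.coe_prodEquivOfIsCompl K C hC) ((0 : K), c)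
      rw [show ((K.prodEquivOfIsCompl C hC) ((0 : K), c) : R)
          = (K.subtype.coprod C.subtype) ((0 : K), c) from this]
      simp
    rw [hg]
    simp only [LinearEquiv.trans_apply, h1, LinearEquiv.prodCongr_apply]
    show (D.prodEquivOfIsCompl I hD.symm) (eDK.symm 0, eCI c) = _
    rw [map_zero]
    have : (D.prodEquivOfIsCompl I hD.symm) (0, eCI c) = ((0 : D) : R) + ((eCI c : I) : R) :=
      DFunLike.congr_fun (Submodule.coe_prodEquivOfIsCompl D I hD.symm) ((0 : D), eCI c)
    rw [this, Submodule.coe_zero, zero_add, eCI_coe]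
  -- g x = x * g 1
  have hglin : ∀ x : R, g x = x * g 1 := fun x => by
    have h := map_smul g x (1 : R)
    rw [smul_eq_mul, smul_eq_mul, mul_one] at h
    exact h
  have hglin' : ∀ x : R, g.symm x = x * g.symm 1 := fun x => by
    have h := map_smul g.symm x (1 : R)
    rw [smul_eq_mul, smul_eq_mul, mul_one] at h
    exact h
  have h1 : g.symm 1 * g 1 = 1 := by
    have := hglin' (g 1)
    rw [g.symm_apply_apply] at this
    -- 1 = g 1 * g.symm 1
    have h2 := hglin (g.symm 1)
    rw [g.apply_symm_apply] at h2
    -- 1 = g.symm 1 * g 1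
    exact h2.symm
  have h2 : g 1 * g.symm 1 = 1 := by
    have := hglin' (g 1)
    rw [g.symm_apply_apply] at this
    exact this.symm
  set u : Rˣ := ⟨g.symm 1, g 1, h1, h2⟩ with hu
  refine ⟨u, ?_⟩
  -- decompose 1 = k + c
  obtain ⟨k, c, hk, hc, hkc⟩ := Submodule.codisjoint_iff_exists_add_eq.mp hC.codisjoint 1
  have ha : a = g c := by
    have : ρ 1 = a := by rw [hρa, one_mul]
    rw [← this, ← hkc, map_add]
    have hkz : ρ k = 0 := hk
    rw [hkz, zero_add]
    exact (hgC ⟨c, hc⟩).symm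
  have hau : a * u = c := by
    show a * g.symm 1 = c
    rw [← hglin', ha, g.symm_apply_apply]
  calc a * ↑u * a = c * a := by rw [hau]
    _ = ρ c := (hρa c).symm
    _ = g c := (hgC ⟨c, hc⟩).symm
    _ = a := ha.symm
end

section
open Submodule

variable {R : Type u} [Ring R]

/-- In a semisimple ring, a two-sided ideal is generated by a central idempotent. -/
theorem twoSidedIdeal_central_idempotent [IsSemisimpleRing R] (I : Ideal R)
    (hI : ∀ x ∈ I, ∀ r : R, x * r ∈ I) :
    ∃ e : R, IsIdempotentElem e ∧ (∀ r : R, e * r = r * e) ∧ I = Ideal.span {e} := by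
  obtain ⟨e, he, hIe⟩ := IsSemisimpleRing.ideal_eq_span_idempotent I
  have heI : e ∈ I := hIe ▸ Ideal.subset_span rfl
  have memI : ∀ x, x ∈ I ↔ ∃ r : R, r * e = x := by
    intro x
    rw [hIe, Ideal.span]
    exact Submodule.mem_span_singleton
  -- x ∈ I → x * e = x
  have hre : ∀ x ∈ I, x * e = x := by
    intro x hx
    obtain ⟨r, rfl⟩ := (memI x).mp hx
    rw [mul_assoc, he.eq]
  -- e r e = e r
  have here : ∀ r : R, e * r * e = e * r := fun r => hre _ (hI e heI r)
  -- J = {x | e * x = 0} is a two-sided ideal (as a left ideal here)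
  set J : Ideal R :=
    { carrier := {x | e * x = 0}
      add_mem' := fun {x y} hx hy => by
        simp only [Set.mem_setOf_eq] at *
        rw [mul_add, hx, hy, add_zero]
      zero_mem' := by simp
      smul_mem' := fun c x hx => by
        simp only [Set.mem_setOf_eq, smul_eq_mul] at *
        calc e * (c * x) = e * c * x := by rw [mul_assoc]
          _ = e * c * e * x := by rw [here]
          _ = e * c * (e * x) := by rw [mul_assoc]
          _ = 0 := by rw [hx, mul_zero] } with hJ
  have memJ : ∀ x, x ∈ J ↔ e * x = 0 := fun x => Iff.rfl
  -- I ⊓ J squares to zero hence is ⊥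
  have hIJ : I ⊓ J = ⊥ := by
    obtain ⟨f, hf, hIJf⟩ := IsSemisimpleRing.ideal_eq_span_idempotent (I ⊓ J)
    have hfmem : f ∈ I ⊓ J := hIJf ▸ Ideal.subset_span rfl
    have hf0 : f = 0 := by
      have h1 : f * e = f := hre f hfmem.1
      have h2 : e * f = 0 := (memJ f).mp hfmem.2
      calc f = f * f := hf.eq.symm
        _ = (f * e) * f := by rw [h1]
        _ = f * (e * f) := by rw [mul_assoc]
        _ = 0 := by rw [h2, mul_zero]
    rw [hIJf, hf0]
    exact Ideal.span_singleton_eq_bot.mpr rfl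
  -- e is central
  have hcentral : ∀ r : R, e * r = r * e := by
    intro r
    have h1 : r * e - e * r * e ∈ I := by
      apply sub_mem
      · exact I.smul_mem r heI
      · exact I.smul_mem _ heI
    have h2 : r * e - e * r * e ∈ J := by
      rw [memJ, mul_sub]
      have t1 : e * (r * e) = e * r * e := (mul_assoc e r e).symm
      have t2 : e * (e * r * e) = e * r * e := by
        rw [← mul_assoc, ← mul_assoc, he.eq]
      rw [t1, t2, sub_self]
    have h0 : r * e - e * r * e ∈ I ⊓ J := ⟨h1, h2⟩
    rw [hIJ] at h0
    have h3 : r * e = e * r * e := sub_eq_zero.mp (by simpa using h0)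
    exact (here r).symm.trans h3.symm
  exact ⟨e, he, hcentral, hIe⟩
end

section
theorem split_of_surjective {R S : Type u} [Ring R] [Ring S] [IsSemisimpleRing R]
    (φ : R →+* S) (hφ : Function.Surjective φ) :
    ∃ (T : Type u) (_ : Ring T), IsSemisimpleRing T ∧
      ∃ ψ : R →+* T, Function.Bijective (fun r => ((φ r, ψ r) : S × T)) := by
  obtain ⟨e, he, hce, hker⟩ := twoSidedIdeal_central_idempotent (RingHom.ker φ)
    (fun x hx r => by
      rw [RingHom.mem_ker] at *
      rw [map_mul, hx, zero_mul])
  have heker : e ∈ RingHom.ker φ := hker ▸ Ideal.subset_span rfl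
  have hre : ∀ x ∈ RingHom.ker φ, x * e = x := by
    intro x hx
    rw [hker, Ideal.span, Submodule.mem_span_singleton] at hx
    obtain ⟨r, rfl⟩ := hx
    show r * e * e = r * e
    rw [mul_assoc, he.eq]
  set c : RingCon R :=
    { r := fun x y => x * e = y * e
      iseqv := ⟨fun _ => rfl, Eq.symm, Eq.trans⟩
      mul' := fun {a b p q} ha hp => by
        show a * p * e = b * q * e
        calc a * p * e = a * (p * e) := by rw [mul_assoc]
          _ = a * (q * e) := by rw [hp]
          _ = a * (e * q) := by rw [hce]
          _ = a * e * q := by rw [mul_assoc]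
          _ = b * e * q := by rw [ha]
          _ = b * (e * q) := by rw [mul_assoc]
          _ = b * (q * e) := by rw [hce]
          _ = b * q * e := by rw [mul_assoc]
      add' := fun {a b p q} ha hp => by
        show (a + p) * e = (b + q) * e
        rw [add_mul, add_mul, ha, hp] } with hc
  have hcrel : ∀ x y : R, (c x y) ↔ x * e = y * e := fun x y => Iff.rfl
  have mk'surj : Function.Surjective (c.mk') := by
    intro t
    obtain ⟨r, hr⟩ := Quotient.exists_rep t
    exact ⟨r, hr⟩
  refine ⟨c.Quotient, inferInstance, ?_, c.mk', ?_, ?_⟩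
  · exact RingHom.isSemisimpleRing_of_surjective c.mk' mk'surj
  · -- injective
    intro x y hxy
    rw [Prod.ext_iff] at hxy
    obtain ⟨h1, h2⟩ := hxy
    have h2' : x * e = y * e := c.eq.mp h2
    have h1' : (x - y) ∈ RingHom.ker φ := by
      rw [RingHom.mem_ker, map_sub, sub_eq_zero]
      exact h1
    have h3 := hre _ h1'
    rw [sub_mul, h2', sub_self] at h3
    exact sub_eq_zero.mp h3.symm
  · -- surjective
    rintro ⟨s, t⟩
    obtain ⟨p, rfl⟩ := hφ s
    obtain ⟨q, rfl⟩ := mk'surj t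
    refine ⟨p - p * e + q * e, ?_⟩
    have hφe : φ e = 0 := heker
    refine Prod.ext ?_ ?_
    · show φ (p - p * e + q * e) = φ p
      rw [map_add, map_sub, map_mul, map_mul, hφe, mul_zero, mul_zero, sub_zero, add_zero]
    · show c.mk' (p - p * e + q * e) = c.mk' q
      apply c.eq.mpr
      show (p - p * e + q * e) * e = q * e
      rw [add_mul, sub_mul, mul_assoc, he.eq, mul_assoc, he.eq, sub_self, zero_add]
end

def auxS (R : ℕ → Type u) (T : ℕ → Type u) : ℕ → Type u
  | 0 => R 0
  | (k+1) => T k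

def auxInstS (R : ℕ → Type u) [inst : ∀ i, Ring (R i)] (T : ℕ → Type u)
    (instT : ∀ k, Ring (T k)) : ∀ i, Ring (auxS R T i)
  | 0 => inst 0
  | (k+1) => instT k




universe u

/-- The inverse limit of an inverse system of rings `(Rᵢ, fᵢ)` indexed by `ℕ`. -/
def ringInverseLimit (R : ℕ → Type u) [∀ i, Ring (R i)]
    (f : ∀ i, R (i + 1) →+* R i) : Subring (∀ i, R i) where
  carrier := {x | ∀ i, f i (x (i + 1)) = x i}
  zero_mem' := by intro i; simp
  one_mem' := by intro i; simp
  add_mem' := by intro x y hx hy i; simp [map_add, hx i, hy i]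
  mul_mem' := by intro x y hx hy i; simp [map_mul, hx i, hy i]
  neg_mem' := by intro x hx i; simp [map_neg, hx i]

/-- An inverse limit of semisimple rings along surjective connecting maps is
isomorphic to a direct product of semisimple rings; in particular it is unit-regular. -/
theorem stmt_10 (R : ℕ → Type u) [∀ i, Ring (R i)] (f : ∀ i, R (i + 1) →+* R i)
    (hsurj : ∀ i, Function.Surjective (f i)) (hss : ∀ i, IsSemisimpleRing (R i)) :
    (∃ (S : ℕ → Type u) (inst : ∀ i, Ring (S i)),
      (∀ i, letI := inst i; IsSemisimpleRing (S i)) ∧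
      (letI : ∀ i, Ring (S i) := inst;
        Nonempty ((ringInverseLimit R f) ≃+* ((i : ℕ) → S i)))) ∧
    (∀ a : ringInverseLimit R f, ∃ u : (ringInverseLimit R f)ˣ, a * u * a = a) := by
  classical
  have H : ∀ i, ∃ (T : Type u) (_ : Ring T), IsSemisimpleRing T ∧
      ∃ ψ : R (i+1) →+* T, Function.Bijective (fun r => ((f i r, ψ r) : R i × T)) := by
    intro i
    haveI := hss (i+1)
    exact split_of_surjective (f i) (hsurj i)
  choose T instT hssT ψ hbij using H
  -- the product factors
  let S : ℕ → Type u := auxS R T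
  let instS : ∀ i, Ring (S i) := auxInstS R T instT
  have hssS : ∀ i, letI := instS i; IsSemisimpleRing (S i) := fun i => by
    match i with
    | 0 => exact hss 0
    | (k+1) => exact hssT k
  letI : ∀ i, Ring (S i) := instS
  set L := ringInverseLimit R f with hL
  let proj : ∀ i, L →+* R i := fun i => (Pi.evalRingHom R i).comp L.subtype
  have hprojmem : ∀ (x : L) (k : ℕ), f k (proj (k+1) x) = proj k x := fun x k => x.2 k
  let g : ∀ i, L →+* S i := fun i => match i with
    | 0 => proj 0
    | (k+1) => (ψ k).comp (proj (k+1))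
  let Φ : L →+* ∀ i, S i := Pi.ringHom g
  have hinj : Function.Injective Φ := by
    intro x y hxy
    have hcomp : ∀ i, (x : ∀ j, R j) i = (y : ∀ j, R j) i := by
      intro i
      induction i with
      | zero => exact congrFun (congrArg (fun z => z) hxy) 0
      | succ k ih =>
        have h1 : (f k ((x : ∀ j, R j) (k+1)), ψ k ((x : ∀ j, R j) (k+1)))
            = (f k ((y : ∀ j, R j) (k+1)), ψ k ((y : ∀ j, R j) (k+1))) := by
          refine Prod.ext ?_ ?_
          · show f k (proj (k+1) x) = f k (proj (k+1) y)
            rw [hprojmem x k, hprojmem y k]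
            exact ih
          · exact congrFun hxy (k+1)
        exact (hbij k).1 h1
    exact Subtype.ext (funext hcomp)
  have hsurjΦ : Function.Surjective Φ := by
    intro s
    let x : ∀ i, R i := fun i => Nat.rec (s 0) (fun k xk =>
      ((Equiv.ofBijective _ (hbij k)).symm (xk, s (k+1)) : R (k+1))) i
    have hx : ∀ k, (f k (x (k+1)), ψ k (x (k+1))) = (x k, s (k+1)) := fun k =>
      (Equiv.ofBijective _ (hbij k)).apply_symm_apply (x k, s (k+1))
    have hmem : x ∈ L := fun k => congrArg Prod.fst (hx k)
    refine ⟨⟨x, hmem⟩, ?_⟩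
    funext i
    match i with
    | 0 => rfl
    | (k+1) => exact congrArg Prod.snd (hx k)
  have equiv : L ≃+* ∀ i, S i := RingEquiv.ofBijective Φ ⟨hinj, hsurjΦ⟩
  constructor
  · exact ⟨S, instS, hssS, ⟨equiv⟩⟩
  · intro a
    have hur : ∀ i (b : S i), ∃ u : (S i)ˣ, b * u * b = b := fun i b => by
      haveI := hssS i
      exact semisimple_unitRegular b
    set b := equiv a with hb
    choose u hu using fun i => hur i (b i)
    have hv1 : (fun i => (u i : S i)) * (fun i => (((u i)⁻¹ : (S i)ˣ) : S i)) = (1 : ∀ i, S i) := by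
      funext i; exact (u i).mul_inv
    have hv2 : (fun i => (((u i)⁻¹ : (S i)ˣ) : S i)) * (fun i => (u i : S i)) = (1 : ∀ i, S i) := by
      funext i; exact (u i).inv_mul
    let v : (∀ i, S i)ˣ := ⟨fun i => (u i : S i), fun i => (((u i)⁻¹ : (S i)ˣ) : S i), hv1, hv2⟩
    have hbv : b * v * b = b := by
      funext i
      exact hu i
    refine ⟨(Units.map (equiv.symm : (∀ i, S i) ≃+* L).toMonoidHom) v, ?_⟩
    apply equiv.injective
    rw [map_mul, map_mul]
    have hcoe : ((Units.map (equiv.symm : (∀ i, S i) ≃+* L).toMonoidHom) v : L)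
        = equiv.symm (v : ∀ i, S i) := rfl
    rw [hcoe, RingEquiv.apply_symm_apply]
    exact hbv
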